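/- Let G be a simplicial group acting on a simplicial set X with X/G discrete. Then the canonical map G ×_{G_0} X_0 → X (from the quotient of G × X_0 by the relation (g·h, v) ~ (g, h·v) for h ∈ G_0, viewing X_0 as a discrete simplicial set) is an isomorphism if and only if the stabilizer simplicial group G_v is discrete for every vertex v ∈ X_0. -/

import Mathlib

open CategoryTheory SSet Simplicial Opposite

/-- An action of a simplicial group `G` (a functor to `Grp`) on a simplicial
set `X`: levelwise group actions compatible with the simplicial operators. -/
structure SimplicialAction (G : SimplexCategoryᵒᵖ ⥤ GrpCat.{0}) (X : SSet.{0}) where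
  act : ∀ n : SimplexCategoryᵒᵖ, ∀ _ : G.obj n, X.obj n → X.obj n
  one_act : ∀ (n) (x : X.obj n), act n 1 x = x
  mul_act : ∀ (n) (g h : G.obj n) (x : X.obj n),
    act n (g * h) x = act n g (act n h x)
  naturality : ∀ {n m : SimplexCategoryᵒᵖ} (φ : n ⟶ m) (g : G.obj n) (x : X.obj n),
    X.map φ (act n g x) = act m (G.map φ g) (X.map φ x)

/-- The (iterated) degenerate simplex `s₀ⁿ(v)` of a vertex `v`, at an
arbitrary simplicial level. -/
def vtx (X : SSet.{0}) (v : X _⦋0⦌) (n : SimplexCategoryᵒᵖ) : X.obj n :=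
  X.map (SimplexCategory.const n.unop (SimplexCategory.mk 0) 0).op v

variable {G : SimplexCategoryᵒᵖ ⥤ GrpCat.{0}} {X : SSet.{0}}

/-- The orbit `Gv ⊆ X` of a vertex `v`, levelwise. -/
def orbitSet (A : SimplicialAction G X) (v : X _⦋0⦌) (n : SimplexCategoryᵒᵖ) :
    Set (X.obj n) :=
  {x | ∃ g : G.obj n, x = A.act n g (vtx X v n)}

/-- The stabilizer `G_v ⊆ G` of a vertex `v`, levelwise. -/
def stabSet (A : SimplicialAction G X) (v : X _⦋0⦌) (n : SimplexCategoryᵒᵖ) :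
    Set (G.obj n) :=
  {g | A.act n g (vtx X v n) = vtx X v n}

/-- The canonical degeneracy map `G_0 → G_n`. -/
def degMap (G : SimplexCategoryᵒᵖ ⥤ GrpCat.{0}) (n : SimplexCategoryᵒᵖ) :
    G.obj (op (SimplexCategory.mk 0)) → G.obj n :=
  G.map (SimplexCategory.const n.unop (SimplexCategory.mk 0) 0).op

/-- The relation on `G_n × X_0` generated by `(g · s₀ⁿ(h), v) ~ (g, h · v)`
for `h ∈ G_0`, whose quotient is `(G ×_{G_0} X_0)_n`. -/
def balancedRel (A : SimplicialAction G X) (n : SimplexCategoryᵒᵖ)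
    (p q : G.obj n × X _⦋0⦌) : Prop :=
  ∃ h : G.obj (op (SimplexCategory.mk 0)),
    p.1 = q.1 * degMap G n h ∧ q.2 = A.act (op (SimplexCategory.mk 0)) h p.2

/-- The canonical map `G × X_0 → X`, `(g, v) ↦ g · s₀ⁿ(v)`, which descends to
`G ×_{G_0} X_0 → X`. -/
def balancedMap (A : SimplicialAction G X) (n : SimplexCategoryᵒᵖ)
    (p : G.obj n × X _⦋0⦌) : X.obj n :=
  A.act n p.1 (vtx X p.2 n)

section Aux

lemma to_zero_eq_const {a : SimplexCategory} (f : a ⟶ SimplexCategory.mk 0) :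
    f = SimplexCategory.const a (SimplexCategory.mk 0) 0 :=
  SimplexCategory.eq_const_to_zero f

lemma vtx_zero (v : X _⦋0⦌) : vtx X v (op (SimplexCategory.mk 0)) = v := by
  show X.map (SimplexCategory.const (SimplexCategory.mk 0) (SimplexCategory.mk 0) 0).op v = v
  rw [← to_zero_eq_const (𝟙 (SimplexCategory.mk 0))]
  simp

lemma vtx_map (v : X _⦋0⦌) {n m : SimplexCategoryᵒᵖ} (φ : n ⟶ m) :
    X.map φ (vtx X v n) = vtx X v m := by
  show X.map φ (X.map _ v) = X.map _ v
  rw [← FunctorToTypes.map_comp_apply]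
  congr 1

lemma degMap_map (h : G.obj (op (SimplexCategory.mk 0))) {n m : SimplexCategoryᵒᵖ}
    (φ : n ⟶ m) : G.map φ (degMap G n h) = degMap G m h := by
  show G.map φ (G.map _ h) = G.map _ h
  rw [← CategoryTheory.comp_apply, ← G.map_comp]
  congr 2

lemma degMap_zero (a : G.obj (op (SimplexCategory.mk 0))) :
    degMap G (op (SimplexCategory.mk 0)) a = a := by
  show G.map (SimplexCategory.const (SimplexCategory.mk 0) (SimplexCategory.mk 0) 0).op a = a
  rw [← to_zero_eq_const (𝟙 (SimplexCategory.mk 0))]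
  simp

lemma degMap_injective (n : SimplexCategoryᵒᵖ) : Function.Injective (degMap G n) := by
  intro a b hab
  have := congrArg (G.map (SimplexCategory.const (SimplexCategory.mk 0) n.unop 0).op) hab
  rw [degMap_map, degMap_map, degMap_zero, degMap_zero] at this
  exact this

lemma degMap_mul (a b : G.obj (op (SimplexCategory.mk 0))) (n : SimplexCategoryᵒᵖ) :
    degMap G n (a * b) = degMap G n a * degMap G n b :=
  MonoidHom.map_mul (G.map _).hom a b

lemma degMap_one (n : SimplexCategoryᵒᵖ) : degMap G n 1 = 1 :=
  MonoidHom.map_one (G.map _).hom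

lemma degMap_inv (a : G.obj (op (SimplexCategory.mk 0))) (n : SimplexCategoryᵒᵖ) :
    degMap G n a⁻¹ = (degMap G n a)⁻¹ :=
  MonoidHom.map_inv (G.map _).hom a

lemma act_deg_vtx (A : SimplicialAction G X) (n : SimplexCategoryᵒᵖ)
    (h : G.obj (op (SimplexCategory.mk 0))) (v : X _⦋0⦌) :
    A.act n (degMap G n h) (vtx X v n) = vtx X (A.act (op (SimplexCategory.mk 0)) h v) n :=
  (A.naturality (SimplexCategory.const n.unop (SimplexCategory.mk 0) 0).op h v).symm

lemma balancedRel_equivalence (A : SimplicialAction G X) (n : SimplexCategoryᵒᵖ) :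
    Equivalence (balancedRel A n) := by
  constructor
  · intro p
    exact ⟨1, by rw [degMap_one]; simp, (A.one_act _ _).symm⟩
  · rintro p q ⟨h, h1, h2⟩
    refine ⟨h⁻¹, ?_, ?_⟩
    · rw [h1, degMap_inv]
      group
    · rw [h2, ← A.mul_act, inv_mul_cancel, A.one_act]
  · rintro p q r ⟨h₁, h11, h12⟩ ⟨h₂, h21, h22⟩
    refine ⟨h₂ * h₁, ?_, ?_⟩
    · rw [h11, h21, degMap_mul]
      group
    · rw [h22, h12, ← A.mul_act]

lemma balancedMap_eq_of_rel (A : SimplicialAction G X) (n : SimplexCategoryᵒᵖ)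
    {p q : G.obj n × X _⦋0⦌} (hpq : balancedRel A n p q) :
    balancedMap A n p = balancedMap A n q := by
  obtain ⟨h, h1, h2⟩ := hpq
  show A.act n p.1 (vtx X p.2 n) = A.act n q.1 (vtx X q.2 n)
  rw [h1, h2, A.mul_act, act_deg_vtx]

end Aux

/-!
STATEMENT 8: let a simplicial group `G` act on a simplicial set `X` with
discrete orbit space `X/G`.  Then the canonical map `G ×_{G_0} X_0 → X` is an
isomorphism of simplicial sets (levelwise: the map `G_n × X_0 → X_n` is
surjective and its fibres are exactly the equivalence classes of the relation
generated by `(g·s₀ⁿ(h), v) ~ (g, h·v)`) **iff** the stabilizer simplicial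
group `G_v` is discrete for every vertex `v` (i.e. all degeneracies
`(G_v)_0 → (G_v)_n` are bijections). -/
theorem balanced_product_iso_iff_discrete_stabilizers (A : SimplicialAction G X)
    (hsurj : ∀ (n) (x : X.obj n), ∃ (v : X _⦋0⦌) (g : G.obj n),
      x = A.act n g (vtx X v n))
    (hinj : ∀ (v w : X _⦋0⦌) (n : SimplexCategoryᵒᵖ),
      (∃ g : G.obj n, A.act n g (vtx X v n) = vtx X w n) →
      ∃ g₀, A.act (op (SimplexCategory.mk 0)) g₀
          (vtx X v (op (SimplexCategory.mk 0))) =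
        vtx X w (op (SimplexCategory.mk 0))) :
    ((∀ n, Function.Surjective (balancedMap A n)) ∧
      (∀ (n) (p q : G.obj n × X _⦋0⦌),
        balancedMap A n p = balancedMap A n q ↔
          Relation.EqvGen (balancedRel A n) p q)) ↔
    (∀ (v : X _⦋0⦌) (n : SimplexCategoryᵒᵖ),
      Set.BijOn (degMap G n) (stabSet A v (op (SimplexCategory.mk 0)))
        (stabSet A v n)) := by
  constructor
  · rintro ⟨-, hfib⟩ v n
    refine ⟨?_, fun a _ b _ hab => degMap_injective n hab, ?_⟩
    · intro h hh
      show A.act n (degMap G n h) (vtx X v n) = vtx X v n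
      rw [act_deg_vtx]
      have hv : A.act _ h (vtx X v _) = vtx X v _ := hh
      rw [vtx_zero] at hv
      rw [hv]
    · intro g hg
      have h1 : balancedMap A n (g, v) = balancedMap A n (1, v) := by
        show A.act n g (vtx X v n) = A.act n 1 (vtx X v n)
        rw [A.one_act]; exact hg
      have h3 : balancedRel A n (g, v) (1, v) :=
        ((balancedRel_equivalence A n).eqvGen_iff).mp ((hfib n (g, v) (1, v)).mp h1)
      obtain ⟨h, hh1, hh2⟩ := h3
      refine ⟨h, ?_, ?_⟩
      · show A.act _ h (vtx X v _) = vtx X v _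
        rw [vtx_zero]; exact hh2.symm
      · simpa using hh1.symm
  · intro hstab
    refine ⟨fun n x => ?_, fun n p q => ⟨?_, ?_⟩⟩
    · obtain ⟨v, g, hx⟩ := hsurj n x
      exact ⟨(g, v), hx.symm⟩
    · intro heq
      obtain ⟨g, v⟩ := p
      obtain ⟨g', w⟩ := q
      have heq' : A.act n g (vtx X v n) = A.act n g' (vtx X w n) := heq
      have horb : ∃ k : G.obj n, A.act n k (vtx X v n) = vtx X w n := by
        refine ⟨g'⁻¹ * g, ?_⟩
        rw [A.mul_act, heq', ← A.mul_act, inv_mul_cancel, A.one_act]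
      obtain ⟨h₀, hh₀⟩ := hinj v w n horb
      rw [vtx_zero, vtx_zero] at hh₀
      have hw : vtx X w n = A.act n (degMap G n h₀) (vtx X v n) := by
        rw [act_deg_vtx, hh₀]
      have hk : (g' * degMap G n h₀)⁻¹ * g ∈ stabSet A v n := by
        show A.act n _ (vtx X v n) = vtx X v n
        have h2 : A.act n g (vtx X v n) = A.act n (g' * degMap G n h₀) (vtx X v n) := by
          rw [A.mul_act, ← hw]; exact heq'
        rw [A.mul_act, h2, ← A.mul_act, inv_mul_cancel, A.one_act]
      obtain ⟨h₁, hh₁mem, hh₁⟩ := (hstab v n).2.2 hk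
      apply Relation.EqvGen.rel
      refine ⟨h₀ * h₁, ?_, ?_⟩
      · show g = g' * degMap G n (h₀ * h₁)
        rw [degMap_mul, hh₁]
        group
      · show w = A.act _ (h₀ * h₁) v
        have hmem : A.act _ h₁ (vtx X v _) = vtx X v _ := hh₁mem
        rw [vtx_zero] at hmem
        rw [A.mul_act, hmem, hh₀]
    · intro hgen
      induction hgen with
      | rel p q hpq => exact balancedMap_eq_of_rel A n hpq
      | refl p => rfl
      | symm p q _ ih => exact ih.symm
      | trans p q r _ _ ih1 ih2 => exact ih1.trans ih2
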